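/- Let p be a prime and R a set of residues modulo p with |R| = s ≥ 1, let L = {l ≥ 0 : l mod p ∈ R}, and let k be an integer with k ≥ s. Then for every finite simple graph G that admits a k-uniform L-intersection representation, mr_{ℤ_p}(G^c) ≤ C(Θ_{L,k}(G), s). -/

import Mathlib

/-- An `L`-intersection representation of `G` with universe `Fin l`: two distinct vertices are
adjacent iff the size of the intersection of their assigned sets lies in `L`. -/
def IsLRep {V : Type*} {l : ℕ} (G : SimpleGraph V) (L : Set ℕ) (A : V → Finset (Fin l)) : Prop :=
  ∀ u v : V, u ≠ v → (G.Adj u v ↔ (A u ∩ A v).card ∈ L)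

/-- `G` has an `L`-intersection representation on a universe of size `l`. -/
def HasLRep {V : Type*} (G : SimpleGraph V) (L : Set ℕ) (l : ℕ) : Prop :=
  ∃ A : V → Finset (Fin l), IsLRep G L A

/-- The `L`-intersection number `Θ_L(G)`. -/
noncomputable def thetaL {V : Type*} (G : SimpleGraph V) (L : Set ℕ) : ℕ :=
  sInf {l | HasLRep G L l}

/-- The minimum rank of a graph `G` over a field `F`: the minimum rank of a symmetric matrix
over `F` whose off-diagonal entries are nonzero exactly at the edges of `G`
(diagonal entries are arbitrary). -/
noncomputable def minRank (F : Type*) [Field F] {V : Type*} [Fintype V] (G : SimpleGraph V) : ℕ :=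
  sInf {r | ∃ A : Matrix V V F, A.IsSymm ∧
    (∀ u v : V, u ≠ v → (A u v ≠ 0 ↔ G.Adj u v)) ∧ A.rank = r}

/-- `G` has a `k`-uniform `L`-intersection representation with `l` labels: in addition every
assigned set has size exactly `k`. -/
def HasUnifLRep {V : Type*} (G : SimpleGraph V) (L : Set ℕ) (k l : ℕ) : Prop :=
  ∃ A : V → Finset (Fin l), (∀ v, (A v).card = k) ∧ IsLRep G L A

/-- The `(L,k)`-intersection number `Θ_{L,k}(G)`: the least universe size of a `k`-uniform
`L`-intersection representation of `G`. -/
noncomputable def thetaLk {V : Type*} (G : SimpleGraph V) (L : Set ℕ) (k : ℕ) : ℕ :=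
  sInf {l | HasUnifLRep G L k l}


/-- The function `m ↦ C(m,t)` as a map `ℕ → ℚ`. -/
noncomputable def chQ (t : ℕ) : ℕ → ℚ := fun m => (m.choose t : ℚ)

/-- Span of binomial functions of order `≤ n`. -/
noncomputable def SpQ (n : ℕ) : Submodule ℚ (ℕ → ℚ) :=
  Submodule.span ℚ (chQ '' Set.Iic n)

lemma chQ_mem {t n : ℕ} (h : t ≤ n) : chQ t ∈ SpQ n :=
  Submodule.subset_span ⟨t, h, rfl⟩

lemma key0 (m t : ℕ) : ((m : ℚ) - t) * chQ t m = (t + 1) * chQ (t + 1) m := by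
  rcases le_or_gt t m with h | h
  · have := Nat.choose_succ_right_eq m t
    have hcast : ((m.choose (t+1) * (t+1) : ℕ) : ℚ) = ((m.choose t * (m - t) : ℕ) : ℚ) := by
      exact_mod_cast congrArg (Nat.cast : ℕ → ℚ) this
    push_cast [Nat.cast_sub h] at hcast
    simp only [chQ]
    push_cast
    linarith [hcast]
  · simp [chQ, Nat.choose_eq_zero_of_lt h, Nat.choose_eq_zero_of_lt (h.trans (Nat.lt_succ_self t))]

lemma key1 (a : ℚ) (t : ℕ) :
    (fun (m : ℕ) => ((m : ℚ) - a) * chQ t m)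
      = ((t : ℚ) + 1) • chQ (t + 1) + (((t : ℚ) - a)) • chQ t := by
  funext m
  have h0 := key0 m t
  simp only [Pi.add_apply, Pi.smul_apply, smul_eq_mul]
  have : ((m : ℚ) - a) = ((m : ℚ) - t) + ((t : ℚ) - a) := by ring
  rw [this, add_mul, h0]

lemma mul_mem_SpQ {n : ℕ} {g : ℕ → ℚ} (hg : g ∈ SpQ n) (a : ℚ) :
    (fun (m : ℕ) => ((m : ℚ) - a) * g m) ∈ SpQ (n + 1) := by
  induction hg using Submodule.span_induction with
  | mem x hx =>
    obtain ⟨t, ht, rfl⟩ := hx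
    rw [key1 a t]
    have h1 : chQ (t+1) ∈ SpQ (n+1) := chQ_mem (by simpa using Nat.succ_le_succ (Set.mem_Iic.mp ht))
    have h2 : chQ t ∈ SpQ (n+1) := chQ_mem ((Set.mem_Iic.mp ht).trans (Nat.le_succ n))
    exact Submodule.add_mem _ (Submodule.smul_mem _ _ h1) (Submodule.smul_mem _ _ h2)
  | zero =>
    have : (fun (m : ℕ) => ((m : ℚ) - a) * (0 : ℕ → ℚ) m) = (0 : ℕ → ℚ) := by funext m; simp
    rw [this]; exact Submodule.zero_mem _
  | add x y hx hy ihx ihy =>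
    have : (fun (m : ℕ) => ((m : ℚ) - a) * (x + y) m)
        = (fun (m : ℕ) => ((m : ℚ) - a) * x m) + (fun (m : ℕ) => ((m : ℚ) - a) * y m) := by
      funext m; simp [mul_add]
    rw [this]; exact add_mem ihx ihy
  | smul c x hx ihx =>
    have : (fun (m : ℕ) => ((m : ℚ) - a) * (c • x) m) = c • (fun (m : ℕ) => ((m : ℚ) - a) * x m) := by
      funext m; simp [Pi.smul_apply]; ring
    rw [this]; exact Submodule.smul_mem _ _ ihx

lemma prod_mem_SpQ {γ : Type*} [DecidableEq γ] (F : Finset γ) (a : γ → ℚ) :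
    (fun (m : ℕ) => ∏ x ∈ F, ((m : ℚ) - a x)) ∈ SpQ F.card := by
  induction F using Finset.induction_on with
  | empty =>
    have : (fun (m : ℕ) => ∏ x ∈ (∅ : Finset γ), ((m : ℚ) - a x)) = chQ 0 := by
      funext m; simp [chQ]
    rw [this]; simpa using chQ_mem (le_refl 0)
  | insert y F' hx ih =>
    have : (fun (m : ℕ) => ∏ x ∈ insert y F', ((m : ℚ) - a x))
        = fun (m : ℕ) => ((m : ℚ) - a y) * ∏ x ∈ F', ((m : ℚ) - a x) := by
      funext m; rw [Finset.prod_insert hx]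
    rw [this, Finset.card_insert_of_notMem hx]
    exact mul_mem_SpQ ih (a y)

open Matrix

section Stage1

variable {V : Type*} [Fintype V] {l k s : ℕ}

/-- counting lemma: number of `t`-subsets of the universe contained in `X`. -/
lemma sum_subtype_subset_eq_choose (X : Finset (Fin l)) (t : ℕ) :
    (∑ T : {T : Finset (Fin l) // T.card = t}, if T.val ⊆ X then (1 : ℚ) else 0)
      = ((X.card.choose t : ℕ) : ℚ) := by
  classical
  rw [← Finset.sum_subtype (Finset.univ.powersetCard t)
    (fun T => by simp [Finset.mem_powersetCard_univ]) (fun T => if T ⊆ X then (1:ℚ) else 0)]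
  rw [Finset.sum_boole]
  congr 1
  rw [← Finset.card_powersetCard t X]
  congr 1
  ext S
  have := Finset.subset_univ S
  simp only [Finset.mem_filter, Finset.mem_powersetCard_univ, Finset.mem_powersetCard]
  tauto

/-- counting lemma: number of `s`-subsets `S` with `T ⊆ S ⊆ Av`. -/
lemma card_between (Av T : Finset (Fin l)) (hAv : Av.card = k) (hT : T.card ≤ s) (hsk : s ≤ k)
    (hTA : T ⊆ Av) :
    ((Finset.univ.powersetCard s).filter (fun S : Finset (Fin l) => S ⊆ Av ∧ T ⊆ S)).card
      = (k - T.card).choose (s - T.card) := by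
  classical
  have hcard : (Av \ T).card = k - T.card := by rw [Finset.card_sdiff_of_subset hTA, hAv]
  rw [← hcard, ← Finset.card_powersetCard (s - T.card) (Av \ T)]
  apply Finset.card_bij' (fun S _ => S \ T) (fun U _ => U ∪ T)
  · intro S hS
    simp only [Finset.mem_filter, Finset.mem_powersetCard_univ] at hS
    obtain ⟨hScard, hSA, hTS⟩ := hS
    rw [Finset.mem_powersetCard]
    constructor
    · exact Finset.sdiff_subset_sdiff hSA (le_refl T)
    · rw [Finset.card_sdiff_of_subset hTS, hScard]
  · intro U hU
    rw [Finset.mem_powersetCard] at hU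
    obtain ⟨hUA, hUcard⟩ := hU
    have hUAv : U ⊆ Av := hUA.trans (Finset.sdiff_subset)
    have hdisj : Disjoint U T := Finset.disjoint_of_subset_left hUA (Finset.sdiff_disjoint)
    simp only [Finset.mem_filter, Finset.mem_powersetCard_univ]
    refine ⟨?_, Finset.union_subset hUAv hTA, Finset.subset_union_right⟩
    rw [Finset.card_union_of_disjoint hdisj, hUcard]
    omega
  · intro S hS
    simp only [Finset.mem_filter, Finset.mem_powersetCard_univ] at hS
    exact Finset.sdiff_union_of_subset hS.2.2
  · intro U hU
    rw [Finset.mem_powersetCard] at hU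
    have hdisj : Disjoint U T := Finset.disjoint_of_subset_left hU.1 (Finset.sdiff_disjoint)
    exact Finset.union_sdiff_cancel_right hdisj

end Stage1

section Matrices

variable {V : Type*} [Fintype V] {l k s : ℕ}

/-- Inclusion matrix of a set family vs `t`-subsets. -/
noncomputable def inclMat (A : V → Finset (Fin l)) (t : ℕ) :
    Matrix V {T : Finset (Fin l) // T.card = t} ℚ :=
  Matrix.of fun v T => if T.val ⊆ A v then 1 else 0

/-- Inclusion matrix between `s`-subsets and `t`-subsets. -/
noncomputable def betwMat (l s t : ℕ) :
    Matrix {T : Finset (Fin l) // T.card = s} {T : Finset (Fin l) // T.card = t} ℚ :=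
  Matrix.of fun S T => if T.val ⊆ S.val then 1 else 0

lemma inclMat_mul_transpose (A : V → Finset (Fin l)) (t : ℕ) (u v : V) :
    (inclMat A t * (inclMat A t)ᵀ) u v = chQ t ((A u ∩ A v).card) := by
  classical
  rw [Matrix.mul_apply]
  simp only [inclMat, Matrix.transpose_apply, Matrix.of_apply, chQ]
  rw [← sum_subtype_subset_eq_choose (A u ∩ A v) t]
  apply Finset.sum_congr rfl
  intro T _
  by_cases h : T.val ⊆ A u ∩ A v
  · rw [if_pos h, if_pos ((Finset.subset_inter_iff.mp h).1), if_pos ((Finset.subset_inter_iff.mp h).2), mul_one]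
  · rw [if_neg h]
    rcases (by rw [Finset.subset_inter_iff] at h; tauto : ¬ T.val ⊆ A u ∨ ¬ T.val ⊆ A v) with h' | h'
    · rw [if_neg h', zero_mul]
    · rw [if_neg h', mul_zero]

lemma inclMat_s_mul_betw (A : V → Finset (Fin l)) (hcA : ∀ v, (A v).card = k)
    (hsk : s ≤ k) {t : ℕ} (hts : t ≤ s) :
    inclMat A s * betwMat l s t = ((k - t).choose (s - t) : ℚ) • inclMat A t := by
  classical
  ext v T
  rw [Matrix.mul_apply]
  simp only [inclMat, betwMat, Matrix.of_apply, Matrix.smul_apply, smul_eq_mul]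
  have : ∀ S : {T : Finset (Fin l) // T.card = s},
      (if S.val ⊆ A v then (1:ℚ) else 0) * (if T.val ⊆ S.val then 1 else 0)
        = if S.val ⊆ A v ∧ T.val ⊆ S.val then 1 else 0 := by
    intro S
    by_cases h1 : S.val ⊆ A v <;> by_cases h2 : T.val ⊆ S.val <;> simp [h1, h2]
  rw [Finset.sum_congr rfl (fun S _ => this S)]
  rw [← Finset.sum_subtype (Finset.univ.powersetCard s)
    (fun S => by simp [Finset.mem_powersetCard_univ])
    (fun S => if S ⊆ A v ∧ T.val ⊆ S then (1:ℚ) else 0)]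
  rw [Finset.sum_boole]
  by_cases hTA : T.val ⊆ A v
  · rw [if_pos hTA, mul_one]
    rw [card_between (A v) T.val (hcA v) (T.prop.le.trans hts) hsk hTA] -- T.card ≤ s
    rw [T.prop]
  · rw [if_neg hTA, mul_zero]
    have : (Finset.univ.powersetCard s).filter (fun S : Finset (Fin l) => S ⊆ A v ∧ T.val ⊆ S) = ∅ := by
      apply Finset.filter_false_of_mem
      intro S _
      intro hcon
      exact hTA (hcon.2.trans hcon.1)
    rw [this]
    simp

end Matrices

section RankBound

variable {V : Type*} [Fintype V] {l k s : ℕ}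

lemma stage1 (hsk : s ≤ k) (A : V → Finset (Fin l)) (hcA : ∀ v, (A v).card = k)
    {g : ℕ → ℚ} (hg : g ∈ SpQ s) :
    (Matrix.of fun u v => g ((A u ∩ A v).card) : Matrix V V ℚ).rank ≤ l.choose s := by
  classical
  have key : ∃ Q : Matrix {T : Finset (Fin l) // T.card = s} {T : Finset (Fin l) // T.card = s} ℚ, (Matrix.of fun u v => g ((A u ∩ A v).card) : Matrix V V ℚ)
      = inclMat A s * Q * (inclMat A s)ᵀ := by
    induction hg using Submodule.span_induction with
    | mem x hx =>
      obtain ⟨t, ht, rfl⟩ := hx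
      have ht' : t ≤ s := Set.mem_Iic.mp ht
      set c : ℚ := ((k - t).choose (s - t) : ℚ) with hc_def
      have hc : c ≠ 0 := by
        simp only [hc_def, ne_eq, Nat.cast_eq_zero]
        exact (Nat.choose_pos (Nat.sub_le_sub_right hsk t)).ne'
      refine ⟨(c⁻¹ * c⁻¹) • (betwMat l s t * (betwMat l s t)ᵀ), ?_⟩
      have hPt : inclMat A t = c⁻¹ • (inclMat A s * betwMat l s t) := by
        rw [inclMat_s_mul_betw A hcA hsk ht', smul_smul, inv_mul_cancel₀ hc, one_smul]
      have h1 : (Matrix.of fun u v => chQ t ((A u ∩ A v).card) : Matrix V V ℚ)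
          = inclMat A t * (inclMat A t)ᵀ := by
        ext u v; rw [inclMat_mul_transpose]; rfl
      rw [h1, hPt]
      simp only [Matrix.transpose_smul, Matrix.transpose_mul, Matrix.smul_mul, Matrix.mul_smul,
        smul_smul, Matrix.mul_assoc]
    | zero =>
      refine ⟨0, ?_⟩
      ext u v
      simp [Matrix.of_apply]
    | add x y hx hy ihx ihy =>
      obtain ⟨Qx, hQx⟩ := ihx
      obtain ⟨Qy, hQy⟩ := ihy
      refine ⟨Qx + Qy, ?_⟩
      rw [Matrix.mul_add, Matrix.add_mul, ← hQx, ← hQy]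
      ext u v
      simp [Matrix.of_apply]
    | smul a x hx ihx =>
      obtain ⟨Qx, hQx⟩ := ihx
      refine ⟨a • Qx, ?_⟩
      rw [Matrix.mul_smul, Matrix.smul_mul, ← hQx]
      ext u v
      simp [Matrix.of_apply]
  obtain ⟨Q, hQ⟩ := key
  rw [hQ]
  calc (inclMat A s * Q * (inclMat A s)ᵀ).rank
      ≤ (inclMat A s * Q).rank := Matrix.rank_mul_le_left _ _
    _ ≤ (inclMat A s).rank := Matrix.rank_mul_le_left _ _
    _ ≤ Fintype.card {T : Finset (Fin l) // T.card = s} := Matrix.rank_le_card_width _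
    _ = l.choose s := by rw [Fintype.card_finset_len, Fintype.card_fin]

end RankBound

lemma rank_map_zmod_le {p : ℕ} [Fact p.Prime] {m n : Type*} [Fintype m] [Fintype n]
    (M : Matrix m n ℤ) :
    (M.map (Int.cast : ℤ → ZMod p)).rank ≤ (M.map (Int.cast : ℤ → ℚ)).rank := by
  classical
  set B := M.map (Int.cast : ℤ → ZMod p) with hB
  set Q := M.map (Int.cast : ℤ → ℚ) with hQ
  obtain ⟨b, hbsub, hbspan, hbli⟩ := exists_linearIndependent (ZMod p) (Set.range Bᵀ)
  have hbfin : b.Finite := (Set.finite_range Bᵀ).subset hbsub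
  haveI : Fintype b := hbfin.fintype
  have hrankB : B.rank = (Set.toFinset b).card := by
    rw [Matrix.rank_eq_finrank_span_cols, show Set.range B.col = Set.range Bᵀ from rfl, ← hbspan, finrank_span_set_eq_card hbli]
  have hidx : ∀ x : b, ∃ j : n, Bᵀ j = (x : m → ZMod p) := fun x => hbsub x.2
  choose j hj using hidx
  set w : b → (m → ℚ) := fun x => Qᵀ (j x) with hw
  have hwli : LinearIndependent ℚ w := by
    rw [← LinearIndependent.iff_fractionRing ℤ ℚ]
    rw [linearIndependent_iff']
    intro t g hsum i hit
    by_contra hgi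
    obtain ⟨g', hfe, hgcd⟩ := Finset.extract_gcd g ⟨i, hit⟩
    have hG : t.gcd g ≠ 0 := by
      intro h0
      exact hgi ((Finset.gcd_eq_zero_iff.mp h0) i hit)
    have hsum' : ∑ x ∈ t, g' x • w x = 0 := by
      have h2 : t.gcd g • (∑ x ∈ t, g' x • w x) = 0 := by
        rw [Finset.smul_sum, ← hsum]
        apply Finset.sum_congr rfl
        intro x hx
        rw [smul_smul, ← hfe x hx]
      rcases smul_eq_zero.mp h2 with h | h
      · exact absurd h hG
      · exact h
    -- reduce mod p
    have hmod : ∀ x ∈ t, ((g' x : ZMod p)) = 0 := by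
      apply linearIndependent_iff'.mp hbli t (fun x => ((g' x : ℤ) : ZMod p))
      funext i'
      have hcoord : ∑ x ∈ t, (g' x : ℚ) * ((M i' (j x) : ℤ) : ℚ) = 0 := by
        have := congrFun hsum' i'
        simpa [Finset.sum_apply, Pi.smul_apply, hw, hQ, Matrix.transpose_apply,
          Matrix.map_apply, zsmul_eq_mul] using this
      have hint : ∑ x ∈ t, g' x * M i' (j x) = 0 := by
        have : ((∑ x ∈ t, g' x * M i' (j x) : ℤ) : ℚ) = 0 := by
          push_cast
          exact hcoord
        exact_mod_cast this
      have : ((∑ x ∈ t, g' x * M i' (j x) : ℤ) : ZMod p) = 0 := by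
        rw [hint]; simp
      push_cast at this
      simp only [Finset.sum_apply, Pi.smul_apply, smul_eq_mul, Pi.zero_apply]
      rw [← this]
      apply Finset.sum_congr rfl
      intro x hx
      have hx' : (x : m → ZMod p) i' = ((M i' (j x) : ℤ) : ZMod p) := by
        rw [← hj x]
        simp [hB, Matrix.transpose_apply, Matrix.map_apply]
      rw [hx']
    have hdvd : (p : ℤ) ∣ t.gcd g' := by
      apply Finset.dvd_gcd
      intro x hx
      exact (ZMod.intCast_zmod_eq_zero_iff_dvd _ p).mp (hmod x hx)
    rw [hgcd] at hdvd
    have := Int.le_of_dvd one_pos hdvd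
    have hp2 := (Fact.out : p.Prime).two_le
    omega
  -- conclude
  set W := Submodule.span ℚ (Set.range Qᵀ) with hWdef
  haveI : FiniteDimensional ℚ W := FiniteDimensional.span_of_finite ℚ (Set.finite_range Qᵀ)
  have hmemW : ∀ x : b, w x ∈ W := fun x => Submodule.subset_span ⟨j x, rfl⟩
  set w' : b → W := fun x => ⟨w x, hmemW x⟩ with hw'
  have hw'li : LinearIndependent ℚ w' := by
    apply LinearIndependent.of_comp W.subtype
    convert hwli
    rfl
  have hcard : Fintype.card b ≤ Module.finrank ℚ W := hw'li.fintype_card_le_finrank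
  rw [hrankB, Matrix.rank_eq_finrank_span_cols, show Set.range Q.col = Set.range Qᵀ from rfl]
  rwa [Set.toFinset_card]

/-- Let `p` be a prime, `R` a set of residues mod `p` with `|R| = s ≥ 1`,
`L = {l ≥ 0 : l mod p ∈ R}`, and `k ≥ s`. Then every finite simple graph `G` admitting a
`k`-uniform `L`-intersection representation satisfies `mr_{ℤ_p}(Gᶜ) ≤ C(Θ_{L,k}(G), s)`. -/
theorem minRank_compl_le_choose_thetaLk {V : Type*} [Fintype V]
    (p : ℕ) [hp : Fact p.Prime] (R : Finset (ZMod p)) (s : ℕ) (hs : 1 ≤ s) (hR : R.card = s)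
    (L : Set ℕ) (hL : L = {m : ℕ | (m : ZMod p) ∈ R})
    (k : ℕ) (hks : s ≤ k)
    (G : SimpleGraph V) (hrep : ∃ l, HasUnifLRep G L k l) :
    minRank (ZMod p) Gᶜ ≤ (thetaLk G L k).choose s := by
  classical
  set l := thetaLk G L k with hl_def
  have hmem : HasUnifLRep G L k l := Nat.sInf_mem (s := {l | HasUnifLRep G L k l}) hrep
  obtain ⟨A, hcA, hLrep⟩ := hmem
  set M : Matrix V V ℤ :=
    Matrix.of (fun u v => ∏ r ∈ R, (((A u ∩ A v).card : ℤ) - (r.val : ℤ))) with hM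
  set B : Matrix V V (ZMod p) := M.map (Int.cast : ℤ → ZMod p) with hB
  have hBval : ∀ u v, B u v = ∏ r ∈ R, ((((A u ∩ A v).card : ℕ) : ZMod p) - r) := by
    intro u v
    simp only [hB, hM, Matrix.map_apply, Matrix.of_apply]
    push_cast
    apply Finset.prod_congr rfl
    intro r _
    rw [ZMod.natCast_val, ZMod.cast_id]
  have hsymm : B.IsSymm := by
    rw [Matrix.IsSymm]
    ext u v
    simp only [hB, hM, Matrix.transpose_apply, Matrix.map_apply, Matrix.of_apply]
    rw [Finset.inter_comm]
  have hpat : ∀ u v : V, u ≠ v → (B u v ≠ 0 ↔ Gᶜ.Adj u v) := by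
    intro u v hne
    have hz : B u v = 0 ↔ (((A u ∩ A v).card : ℕ) : ZMod p) ∈ R := by
      rw [hBval u v, Finset.prod_eq_zero_iff]
      constructor
      · rintro ⟨r, hrR, hr0⟩
        rw [sub_eq_zero] at hr0
        rwa [hr0]
      · intro hmem
        exact ⟨_, hmem, sub_self _⟩
    have hGadj : G.Adj u v ↔ (((A u ∩ A v).card : ℕ) : ZMod p) ∈ R := by
      rw [hLrep u v hne, hL]
      rfl
    rw [SimpleGraph.compl_adj]
    constructor
    · intro hB0
      refine ⟨hne, ?_⟩
      rw [hGadj]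
      intro hmem
      exact hB0 (hz.mpr hmem)
    · rintro ⟨-, hnadj⟩ hB0
      exact hnadj (hGadj.mpr (hz.mp hB0))
  have hrank : B.rank ≤ l.choose s := by
    have h1 := rank_map_zmod_le (p := p) M
    have h2 : (M.map (Int.cast : ℤ → ℚ))
        = Matrix.of (fun u v =>
            (fun m : ℕ => ∏ r ∈ R, ((m : ℚ) - ((r.val : ℕ) : ℚ))) ((A u ∩ A v).card)) := by
      ext u v
      simp only [hM, Matrix.map_apply, Matrix.of_apply]
      push_cast
      rfl
    have hg : (fun m : ℕ => ∏ r ∈ R, ((m : ℚ) - ((r.val : ℕ) : ℚ))) ∈ SpQ s := by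
      have := prod_mem_SpQ R (fun r => ((r.val : ℕ) : ℚ))
      rwa [hR] at this
    have h3 := stage1 (V := V) (l := l) hks A hcA hg
    rw [← h2] at h3
    exact le_trans h1 h3
  exact le_trans (Nat.sInf_le ⟨B, hsymm, hpat, rfl⟩) hrank
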